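/- Let G = (V, E) be a finite multigraph and fix an ordering of V. If every cutset C_ℓ of this ordering has size at most k, then the treewidth of G is at most k (cutwidth bounds treewidth). -/

import Mathlib

open SimpleGraph

lemma pathGraph_isAcyclic (n : ℕ) : (SimpleGraph.pathGraph n).IsAcyclic := by
  rw [isAcyclic_iff_forall_adj_isBridge]
  have main : ∀ v w : Fin n, (pathGraph n).Adj v w → v.val + 1 = w.val →
      ¬(pathGraph n \ fromEdgeSet {s(v, w)}).Reachable v w := by
    intro v w hadj hvw hreach
    obtain ⟨p⟩ := hreach
    have key : ∀ (a b : Fin n) (q : (pathGraph n \ fromEdgeSet {s(v, w)}).Walk a b),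
        a.val ≤ v.val → b.val ≤ v.val := by
      intro a b q
      induction q with
      | nil => exact id
      | @cons a c b h q ih =>
        intro ha
        apply ih
        rw [sdiff_adj] at h
        obtain ⟨h1, h2⟩ := h
        rw [pathGraph_adj] at h1
        rcases h1 with h1 | h1
        · by_contra hc
          have hav : a = v := Fin.ext (by omega)
          have hcw : c = w := Fin.ext (by omega)
          subst hav; subst hcw
          exact h2 (by simp [fromEdgeSet_adj]; exact hadj.ne)
        · omega
    have := key v w p le_rfl
    omega
  intro v w hadj
  rw [isBridge_iff]
  rcases (pathGraph_adj.mp hadj) with h | h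
  · exact main v w hadj h
  · intro hr
    have hs : s(v, w) = s(w, v) := Sym2.eq_swap
    rw [hs] at hr
    exact main w v hadj.symm h hr.symm


/-- The cutset at position `ℓ` of the ordering `(0, 1, ..., n-1)` of the
vertices `Fin n` of a multigraph whose edges are indexed by `ι` with
endpoints `ends e`. -/
def cutset (n : ℕ) {ι : Type} [Fintype ι] [DecidableEq ι]
    (ends : ι → Fin n × Fin n) (ℓ : Fin n) : Finset ι :=
  Finset.univ.filter fun e =>
    ((ends e).1 ≤ ℓ ∧ ℓ < (ends e).2) ∨ ((ends e).2 ≤ ℓ ∧ ℓ < (ends e).1)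

/-- A tree decomposition of a multigraph with vertex set `V` and edges
indexed by `ι` with endpoints `ends`: a tree with bags covering every vertex,
containing both endpoints of every edge in some bag, and such that for each
vertex the bags containing it span a connected subtree. -/
structure TreeDecomp (V : Type) [DecidableEq V] (ι : Type)
    (ends : ι → V × V) where
  I : Type
  G : SimpleGraph I
  isTree : G.IsTree
  bag : I → Finset V
  covers : ∀ v : V, ∃ i : I, v ∈ bag i
  coversEdge : ∀ e : ι, ∃ i : I, (ends e).1 ∈ bag i ∧ (ends e).2 ∈ bag i
  subtree : ∀ v : V, (G.induce {i : I | v ∈ bag i}).Connected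

/-- Cutwidth bounds treewidth: if, for a fixed ordering of the
vertices of a finite multigraph, every cutset has size at most `k`, then the
graph admits a tree decomposition of width at most `k` (all bags of size at
most `k + 1`), i.e. its treewidth is at most `k`. -/
theorem treewidth_le_cutwidth (n k : ℕ) (ι : Type) [Fintype ι]
    [DecidableEq ι] (ends : ι → Fin n × Fin n)
    (hcut : ∀ ℓ : Fin n, (cutset n ends ℓ).card ≤ k) :
    ∃ td : TreeDecomp (Fin n) ι ends, ∀ i : td.I, (td.bag i).card ≤ k + 1 := by
  classical
  cases n with
  | zero =>
    refine ⟨⟨PUnit, ⊥, ⟨?_, isAcyclic_bot⟩, fun _ => ∅, fun v => v.elim0,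
      fun e => (ends e).1.elim0, fun v => v.elim0⟩, ?_⟩
    · exact ⟨fun a b => by cases a; cases b; exact Reachable.refl _⟩
    · intro i; simp
  | succ m =>
    set mnF : ι → Fin (m + 1) := fun e => min (ends e).1 (ends e).2 with hmnF
    set mxF : ι → Fin (m + 1) := fun e => max (ends e).1 (ends e).2 with hmxF
    have hmm : ∀ e : ι,
        ((ends e).1 ≤ (ends e).2 ∧ mnF e = (ends e).1 ∧ mxF e = (ends e).2) ∨
        ((ends e).2 ≤ (ends e).1 ∧ mnF e = (ends e).2 ∧ mxF e = (ends e).1) := by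
      intro e
      rcases le_total (ends e).1 (ends e).2 with h | h
      · exact Or.inl ⟨h, min_eq_left h, max_eq_right h⟩
      · exact Or.inr ⟨h, min_eq_right h, max_eq_left h⟩
    have hmn_le : ∀ e, (mnF e).val ≤ (mxF e).val := by
      intro e
      rcases hmm e with ⟨hle, h1, h2⟩ | ⟨hle, h1, h2⟩ <;>
        rw [h1, h2] <;> exact Fin.le_def.mp hle
    set S : Fin (m + 1) → Finset ι :=
      fun ℓ => Finset.univ.filter fun e => mnF e < ℓ ∧ ℓ ≤ mxF e with hS
    set bag : Fin (m + 1) → Finset (Fin (m + 1)) :=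
      fun ℓ => insert ℓ ((S ℓ).image mnF) with hbag
    -- cutset characterization
    have hcutmem : ∀ (e : ι) (p : Fin (m + 1)),
        e ∈ cutset (m + 1) ends p ↔ ((mnF e).val ≤ p.val ∧ p.val < (mxF e).val) := by
      intro e p
      rcases hmm e with ⟨hle, h1, h2⟩ | ⟨hle, h1, h2⟩ <;>
        rw [Fin.le_def] at hle <;>
        simp only [cutset, Finset.mem_filter, Finset.mem_univ, true_and, h1, h2,
          Fin.le_def, Fin.lt_def] <;>
        omega
    -- card bound on S
    have hScard : ∀ ℓ, (S ℓ).card ≤ k := by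
      intro ℓ
      by_cases h0 : ℓ.val = 0
      · have hempty : S ℓ = ∅ := by
          apply Finset.eq_empty_of_forall_notMem
          intro e he
          simp only [hS, Finset.mem_filter, Fin.lt_def] at he
          omega
        simp [hempty]
      · have hlt : ℓ.val - 1 < m + 1 := by omega
        refine le_trans (Finset.card_le_card ?_) (hcut ⟨ℓ.val - 1, hlt⟩)
        intro e he
        simp only [hS, Finset.mem_filter, Fin.lt_def, Fin.le_def] at he
        rw [hcutmem e ⟨ℓ.val - 1, hlt⟩]
        simp only []
        omega
    -- membership in bag
    have hmem_bag : ∀ (x ℓ : Fin (m + 1)), x ∈ bag ℓ ↔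
        x = ℓ ∨ ∃ e : ι, mnF e = x ∧ (mnF e).val < ℓ.val ∧ ℓ.val ≤ (mxF e).val := by
      intro x ℓ
      simp only [hbag, Finset.mem_insert, Finset.mem_image, hS, Finset.mem_filter,
        Finset.mem_univ, true_and, Fin.lt_def, Fin.le_def]
      constructor
      · rintro (h | ⟨e, ⟨h1, h2⟩, h3⟩)
        · exact Or.inl h
        · exact Or.inr ⟨e, h3, h1, h2⟩
      · rintro (h | ⟨e, h1, h2, h3⟩)
        · exact Or.inl h
        · exact Or.inr ⟨e, ⟨h2, h3⟩, h1⟩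
    refine ⟨⟨Fin (m + 1), pathGraph (m + 1),
      ⟨pathGraph_connected m, pathGraph_isAcyclic (m + 1)⟩, bag, ?_, ?_, ?_⟩, ?_⟩
    · -- covers
      intro v; exact ⟨v, by rw [hmem_bag]; exact Or.inl rfl⟩
    · -- coversEdge
      intro e
      have hmaxbag : mxF e ∈ bag (mxF e) := by rw [hmem_bag]; exact Or.inl rfl
      have hminbag : mnF e ∈ bag (mxF e) := by
        rcases eq_or_lt_of_le (hmn_le e) with heq | hlt
        · rw [Fin.ext heq]; exact hmaxbag
        · rw [hmem_bag]; exact Or.inr ⟨e, rfl, hlt, le_rfl⟩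
      refine ⟨mxF e, ?_, ?_⟩
      · rcases hmm e with ⟨_, h1, h2⟩ | ⟨_, h1, h2⟩
        · rw [← h1]; exact hminbag
        · rw [← h2]; exact hmaxbag
      · rcases hmm e with ⟨_, h1, h2⟩ | ⟨_, h1, h2⟩
        · rw [← h2]; exact hmaxbag
        · rw [← h1]; exact hminbag
    · -- subtree
      intro v
      set T : Set (Fin (m + 1)) := {i | v ∈ bag i} with hT
      have hvT : v ∈ T := by
        show v ∈ bag v
        rw [hmem_bag]; exact Or.inl rfl
      have hge : ∀ i ∈ T, v.val ≤ i.val := by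
        intro i hi
        have hi' : v ∈ bag i := hi
        rw [hmem_bag] at hi'
        rcases hi' with h | ⟨e, h1, h2, h3⟩
        · subst h; exact le_rfl
        · have : (mnF e).val = v.val := by rw [h1]
          omega
      have hdown : ∀ i : Fin (m + 1), i ∈ T → v.val < i.val →
          ∀ h : i.val - 1 < m + 1, (⟨i.val - 1, h⟩ : Fin (m + 1)) ∈ T := by
        intro i hi hvi h
        have hi' : v ∈ bag i := hi
        rw [hmem_bag] at hi'
        rcases hi' with heq | ⟨e, h1, h2, h3⟩
        · exact absurd (heq ▸ hvi) (lt_irrefl _)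
        · show v ∈ bag ⟨i.val - 1, h⟩
          rw [hmem_bag]
          by_cases hjv : i.val - 1 = v.val
          · exact Or.inl (Fin.ext hjv.symm)
          · have hv1 : (mnF e).val = v.val := by rw [h1]
            exact Or.inr ⟨e, h1, by simp only []; omega, by simp only []; omega⟩
      have hreach : ∀ d : ℕ, ∀ i : Fin (m + 1), ∀ hi : i ∈ T, i.val - v.val = d →
          ((pathGraph (m + 1)).induce T).Reachable ⟨i, hi⟩ ⟨v, hvT⟩ := by
        intro d
        induction d with
        | zero =>
          intro i hi hd
          have : i = v := Fin.ext (by have := hge i hi; omega)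
          subst this
          exact Reachable.refl _
        | succ d ih =>
          intro i hi hd
          have hvi : v.val < i.val := by have := hge i hi; omega
          have hlt : i.val - 1 < m + 1 := by omega
          have hjT : (⟨i.val - 1, hlt⟩ : Fin (m + 1)) ∈ T := hdown i hi hvi hlt
          have hadj : ((pathGraph (m + 1)).induce T).Adj ⟨i, hi⟩ ⟨⟨i.val - 1, hlt⟩, hjT⟩ := by
            have : (pathGraph (m + 1)).Adj i ⟨i.val - 1, hlt⟩ :=
              pathGraph_adj.mpr (Or.inr (by simp only []; omega))
            exact this
          exact hadj.reachable.trans (ih ⟨i.val - 1, hlt⟩ hjT (by simp only []; omega))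
      haveI : Nonempty ↑T := ⟨⟨v, hvT⟩⟩
      refine ⟨fun a b => ?_⟩
      obtain ⟨i, hi⟩ := a
      obtain ⟨j, hj⟩ := b
      exact (hreach _ i hi rfl).trans (hreach _ j hj rfl).symm
    · -- card bound
      intro ℓ
      refine le_trans (Finset.card_insert_le _ _) ?_
      have h1 := Finset.card_image_le (f := mnF) (s := S ℓ)
      have h2 := hScard ℓ
      omega
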